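/- The map X : ℝ² → ℝ⁴ defined by X(u, v) := (u·sin v, −u·cos v, −v, −u²/2) is a conformal parametrization with induced metric ds² = (1 + u²)(du² + dv²) (i.e., ⟨X_u, X_v⟩ = 0 and |X_u|² = |X_v|² = 1 + u²), and its mean curvature vector H := (X_{uu} + X_{vv})/(1 + u²) equals the component of −e₄ = (0,0,0,−1) orthogonal to the tangent plane: H = −e₄ + (1/(1 + u²))[⟨X_u, e₄⟩·X_u + ⟨X_v, e₄⟩·X_v] at every point. Hence X parametrizes a translating soliton of the mean curvature flow in ℝ⁴ with translating velocity −e₄. -/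

import Mathlib

open Real

noncomputable def LCL (a b : ℝ) : ℝ × ℝ →L[ℝ] ℝ :=
  a • ContinuousLinearMap.fst ℝ ℝ ℝ + b • ContinuousLinearMap.snd ℝ ℝ ℝ

lemma LCL_apply (a b : ℝ) (h : ℝ × ℝ) : LCL a b h = a * h.1 + b * h.2 := by
  simp [LCL, smul_eq_mul]

lemma hasF_snd {g : ℝ → ℝ} {g' : ℝ} (q : ℝ × ℝ) (hg : HasDerivAt g g' q.2) :
    HasFDerivAt (fun r : ℝ × ℝ => g r.2) (LCL 0 g') q := by
  have := HasDerivAt.comp_hasFDerivAt (𝕜 := ℝ) q hg hasFDerivAt_snd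
  refine this.congr_fderiv ?_
  ext <;> simp [LCL, smul_eq_mul]

lemma hasF_fst {g : ℝ → ℝ} {g' : ℝ} (q : ℝ × ℝ) (hg : HasDerivAt g g' q.1) :
    HasFDerivAt (fun r : ℝ × ℝ => g r.1) (LCL g' 0) q := by
  have := HasDerivAt.comp_hasFDerivAt (𝕜 := ℝ) q hg hasFDerivAt_fst
  refine this.congr_fderiv ?_
  ext <;> simp [LCL, smul_eq_mul]

lemma hasF_mul {g : ℝ → ℝ} {g' : ℝ} (q : ℝ × ℝ) (hg : HasDerivAt g g' q.2) :
    HasFDerivAt (fun r : ℝ × ℝ => r.1 * g r.2) (LCL (g q.2) (q.1 * g')) q := by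
  have h1 : HasFDerivAt (fun r : ℝ × ℝ => r.1) (ContinuousLinearMap.fst ℝ ℝ ℝ) q :=
    hasFDerivAt_fst
  have := h1.mul (hasF_snd q hg)
  refine this.congr_fderiv ?_
  ext <;> simp [LCL, smul_eq_mul] <;> ring

/-- The Castro–Lerma Hamiltonian stationary Lagrangian translator
`X(u, v) = (u sin v, −u cos v, −v, −u²/2)` in `ℝ⁴`. -/
noncomputable def XCL (p : ℝ × ℝ) : Fin 4 → ℝ :=
  ![p.1 * Real.sin p.2, -(p.1 * Real.cos p.2), -p.2, -(p.1 ^ 2) / 2]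

lemma XCL0 : (fun r : ℝ × ℝ => XCL r 0) = fun r => r.1 * Real.sin r.2 := by
  funext r; simp [XCL]
lemma XCL1 : (fun r : ℝ × ℝ => XCL r 1) = fun r => r.1 * (-Real.cos r.2) := by
  funext r; simp [XCL]
lemma XCL2 : (fun r : ℝ × ℝ => XCL r 2) = fun r => -r.2 := by
  funext r; simp [XCL]
lemma XCL3 : (fun r : ℝ × ℝ => XCL r 3) = fun r => -(r.1 ^ 2) / 2 := by
  funext r; simp [XCL]

lemma hF0 (q : ℝ × ℝ) :
    HasFDerivAt (fun r : ℝ × ℝ => XCL r 0) (LCL (Real.sin q.2) (q.1 * Real.cos q.2)) q := by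
  rw [XCL0]; exact hasF_mul q (Real.hasDerivAt_sin q.2)

lemma hF1 (q : ℝ × ℝ) :
    HasFDerivAt (fun r : ℝ × ℝ => XCL r 1) (LCL (-Real.cos q.2) (q.1 * Real.sin q.2)) q := by
  rw [XCL1]
  have : HasDerivAt (fun t => -Real.cos t) (Real.sin q.2) q.2 := by
    simpa using (Real.hasDerivAt_cos q.2).fun_neg
  exact hasF_mul q this

lemma hF2 (q : ℝ × ℝ) :
    HasFDerivAt (fun r : ℝ × ℝ => XCL r 2) (LCL 0 (-1)) q := by
  rw [XCL2]
  have : HasDerivAt (fun t : ℝ => -t) (-1 : ℝ) q.2 := by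
    simpa using (hasDerivAt_id q.2).fun_neg
  exact hasF_snd q this

lemma hF3 (q : ℝ × ℝ) :
    HasFDerivAt (fun r : ℝ × ℝ => XCL r 3) (LCL (-q.1) 0) q := by
  rw [XCL3]
  have : HasDerivAt (fun t : ℝ => -(t ^ 2) / 2) (-q.1) q.1 := by
    have := ((hasDerivAt_pow 2 q.1).fun_neg).div_const 2
    exact this.congr_deriv (by norm_num; ring)
  exact hasF_fst q this

/-- First partial derivative in `u` of the `k`-th component. -/
noncomputable def XCLu (p : ℝ × ℝ) (k : Fin 4) : ℝ :=
  fderiv ℝ (fun q => XCL q k) p (1, 0)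

/-- First partial derivative in `v` of the `k`-th component. -/
noncomputable def XCLv (p : ℝ × ℝ) (k : Fin 4) : ℝ :=
  fderiv ℝ (fun q => XCL q k) p (0, 1)

/-- Second partial derivative in `u` of the `k`-th component. -/
noncomputable def XCLuu (p : ℝ × ℝ) (k : Fin 4) : ℝ :=
  fderiv ℝ (fun q => fderiv ℝ (fun r => XCL r k) q (1, 0)) p (1, 0)

/-- Second partial derivative in `v` of the `k`-th component. -/
noncomputable def XCLvv (p : ℝ × ℝ) (k : Fin 4) : ℝ :=
  fderiv ℝ (fun q => fderiv ℝ (fun r => XCL r k) q (0, 1)) p (0, 1)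

lemma hu0 (p : ℝ × ℝ) : XCLu p 0 = Real.sin p.2 := by
  rw [XCLu, (hF0 p).fderiv, LCL_apply]; ring
lemma hu1 (p : ℝ × ℝ) : XCLu p 1 = -Real.cos p.2 := by
  rw [XCLu, (hF1 p).fderiv, LCL_apply]; ring
lemma hu2 (p : ℝ × ℝ) : XCLu p 2 = 0 := by
  rw [XCLu, (hF2 p).fderiv, LCL_apply]; ring
lemma hu3 (p : ℝ × ℝ) : XCLu p 3 = -p.1 := by
  rw [XCLu, (hF3 p).fderiv, LCL_apply]; ring

lemma hv0 (p : ℝ × ℝ) : XCLv p 0 = p.1 * Real.cos p.2 := by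
  rw [XCLv, (hF0 p).fderiv, LCL_apply]; ring
lemma hv1 (p : ℝ × ℝ) : XCLv p 1 = p.1 * Real.sin p.2 := by
  rw [XCLv, (hF1 p).fderiv, LCL_apply]; ring
lemma hv2 (p : ℝ × ℝ) : XCLv p 2 = -1 := by
  rw [XCLv, (hF2 p).fderiv, LCL_apply]; ring
lemma hv3 (p : ℝ × ℝ) : XCLv p 3 = 0 := by
  rw [XCLv, (hF3 p).fderiv, LCL_apply]; ring

lemma huu0 (p : ℝ × ℝ) : XCLuu p 0 = 0 := by
  have e : (fun q : ℝ × ℝ => fderiv ℝ (fun r => XCL r 0) q (1, 0)) = fun q => Real.sin q.2 := by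
    funext q; rw [(hF0 q).fderiv, LCL_apply]; ring
  rw [XCLuu, e, (hasF_snd p (Real.hasDerivAt_sin p.2)).fderiv, LCL_apply]; ring
lemma hvv0 (p : ℝ × ℝ) : XCLvv p 0 = -(p.1 * Real.sin p.2) := by
  have e : (fun q : ℝ × ℝ => fderiv ℝ (fun r => XCL r 0) q (0, 1)) = fun q => q.1 * Real.cos q.2 := by
    funext q; rw [(hF0 q).fderiv, LCL_apply]; ring
  rw [XCLvv, e, (hasF_mul p (Real.hasDerivAt_cos p.2)).fderiv, LCL_apply]; ring

lemma huu1 (p : ℝ × ℝ) : XCLuu p 1 = 0 := by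
  have e : (fun q : ℝ × ℝ => fderiv ℝ (fun r => XCL r 1) q (1, 0)) = fun q => -Real.cos q.2 := by
    funext q; rw [(hF1 q).fderiv, LCL_apply]; ring
  have h : HasDerivAt (fun t => -Real.cos t) (Real.sin p.2) p.2 := by
    simpa using (Real.hasDerivAt_cos p.2).fun_neg
  rw [XCLuu, e, (hasF_snd p h).fderiv, LCL_apply]; ring
lemma hvv1 (p : ℝ × ℝ) : XCLvv p 1 = p.1 * Real.cos p.2 := by
  have e : (fun q : ℝ × ℝ => fderiv ℝ (fun r => XCL r 1) q (0, 1)) = fun q => q.1 * Real.sin q.2 := by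
    funext q; rw [(hF1 q).fderiv, LCL_apply]; ring
  rw [XCLvv, e, (hasF_mul p (Real.hasDerivAt_sin p.2)).fderiv, LCL_apply]; ring

lemma huu2 (p : ℝ × ℝ) : XCLuu p 2 = 0 := by
  have e : (fun q : ℝ × ℝ => fderiv ℝ (fun r => XCL r 2) q (1, 0)) = fun _ => (0 : ℝ) := by
    funext q; rw [(hF2 q).fderiv, LCL_apply]; ring
  rw [XCLuu, e, fderiv_fun_const]; simp
lemma hvv2 (p : ℝ × ℝ) : XCLvv p 2 = 0 := by
  have e : (fun q : ℝ × ℝ => fderiv ℝ (fun r => XCL r 2) q (0, 1)) = fun _ => (-1 : ℝ) := by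
    funext q; rw [(hF2 q).fderiv, LCL_apply]; ring
  rw [XCLvv, e, fderiv_fun_const]; simp

lemma huu3 (p : ℝ × ℝ) : XCLuu p 3 = -1 := by
  have e : (fun q : ℝ × ℝ => fderiv ℝ (fun r => XCL r 3) q (1, 0)) = fun q => -q.1 := by
    funext q; rw [(hF3 q).fderiv, LCL_apply]; ring
  have h : HasDerivAt (fun t : ℝ => -t) (-1 : ℝ) p.1 := by
    simpa using (hasDerivAt_id p.1).fun_neg
  rw [XCLuu, e, (hasF_fst p h).fderiv, LCL_apply]; ring
lemma hvv3 (p : ℝ × ℝ) : XCLvv p 3 = 0 := by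
  have e : (fun q : ℝ × ℝ => fderiv ℝ (fun r => XCL r 3) q (0, 1)) = fun _ => (0 : ℝ) := by
    funext q; rw [(hF3 q).fderiv, LCL_apply]; ring
  rw [XCLvv, e, fderiv_fun_const]; simp

/-- **(Example: Hamiltonian stationary Lagrangian translator in `ℝ⁴`).** The map
`X(u, v) = (u sin v, −u cos v, −v, −u²/2)` is a conformal parametrization with induced
metric `(1 + u²)(du² + dv²)`, and its mean curvature vector `H = (X_uu + X_vv)/(1 + u²)`
equals the projection of `−e₄ = (0,0,0,−1)` orthogonal to the tangent plane:
`H = −e₄ + (1/(1 + u²))[⟨X_u, e₄⟩·X_u + ⟨X_v, e₄⟩·X_v]`. -/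
theorem castro_lerma_translator (p : ℝ × ℝ) :
    (∑ k : Fin 4, XCLu p k * XCLv p k = 0)
    ∧ (∑ k : Fin 4, (XCLu p k) ^ 2 = 1 + p.1 ^ 2)
    ∧ (∑ k : Fin 4, (XCLv p k) ^ 2 = 1 + p.1 ^ 2)
    ∧ (∀ k : Fin 4,
        (XCLuu p k + XCLvv p k) / (1 + p.1 ^ 2)
          = (if k = 3 then (-1 : ℝ) else 0)
            + (1 / (1 + p.1 ^ 2)) * (XCLu p 3 * XCLu p k + XCLv p 3 * XCLv p k)) := by
  have hpos : (0 : ℝ) < 1 + p.1 ^ 2 := by positivity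
  have hne : (1 + p.1 ^ 2 : ℝ) ≠ 0 := ne_of_gt hpos
  have pyth := Real.sin_sq_add_cos_sq p.2
  refine ⟨?_, ?_, ?_, ?_⟩
  · simp only [Fin.sum_univ_four, hu0, hu1, hu2, hu3, hv0, hv1, hv2, hv3]; ring
  · simp only [Fin.sum_univ_four, hu0, hu1, hu2, hu3]; nlinarith [pyth]
  · simp only [Fin.sum_univ_four, hv0, hv1, hv2, hv3]; nlinarith [pyth]
  · have c0 : (XCLuu p 0 + XCLvv p 0) / (1 + p.1 ^ 2)
          = (if (0 : Fin 4) = 3 then (-1 : ℝ) else 0)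
            + (1 / (1 + p.1 ^ 2)) * (XCLu p 3 * XCLu p 0 + XCLv p 3 * XCLv p 0) := by
      rw [huu0, hvv0, hu0, hu3, hv0, hv3, if_neg (by decide : (0 : Fin 4) ≠ 3)]; field_simp; ring
    have c1 : (XCLuu p 1 + XCLvv p 1) / (1 + p.1 ^ 2)
          = (if (1 : Fin 4) = 3 then (-1 : ℝ) else 0)
            + (1 / (1 + p.1 ^ 2)) * (XCLu p 3 * XCLu p 1 + XCLv p 3 * XCLv p 1) := by
      rw [huu1, hvv1, hu1, hu3, hv1, hv3, if_neg (by decide : (1 : Fin 4) ≠ 3)]; field_simp; ring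
    have c2 : (XCLuu p 2 + XCLvv p 2) / (1 + p.1 ^ 2)
          = (if (2 : Fin 4) = 3 then (-1 : ℝ) else 0)
            + (1 / (1 + p.1 ^ 2)) * (XCLu p 3 * XCLu p 2 + XCLv p 3 * XCLv p 2) := by
      rw [huu2, hvv2, hu2, hu3, hv2, hv3, if_neg (by decide : (2 : Fin 4) ≠ 3)]; ring
    have c3 : (XCLuu p 3 + XCLvv p 3) / (1 + p.1 ^ 2)
          = (if (3 : Fin 4) = 3 then (-1 : ℝ) else 0)
            + (1 / (1 + p.1 ^ 2)) * (XCLu p 3 * XCLu p 3 + XCLv p 3 * XCLv p 3) := by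
      rw [huu3, hvv3, hu3, hv3, if_pos rfl]; field_simp; ring
    intro k
    fin_cases k
    · exact c0
    · exact c1
    · exact c2
    · exact c3
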